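/- Let E be an n×n complex matrix that is non-resonant, i.e., the difference of any two eigenvalues of E is not a nonzero integer. Then there exists a polynomial q ∈ ℂ[X] such that q(exp(2πi·E)) = E, where exp denotes the matrix exponential. In particular, every n×n complex matrix that commutes with exp(2πi·E) also commutes with E. -/

import Mathlib

open Polynomial NormedSpace

section Aux

lemma crt_interp {ι : Type*} [DecidableEq ι] (t v : ι → Polynomial ℂ) (s : Finset ι)
    (h : (s : Set ι).Pairwise (Function.onFun IsCoprime t)) :
    ∃ g : Polynomial ℂ, ∀ i ∈ s, t i ∣ g - v i := by
  induction s using Finset.induction_on with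
  | empty => exact ⟨0, fun i hi => absurd hi (by simp)⟩
  | @insert a s ha ih =>
    obtain ⟨g, hg⟩ := ih (h.mono (Finset.coe_subset.mpr (Finset.subset_insert a s)))
    have hco : IsCoprime (t a) (∏ i ∈ s, t i) :=
      IsCoprime.prod_right fun i hi =>
        h (by simp) (by simp [hi]) (fun hai => ha (hai ▸ hi))
    obtain ⟨u, w, huw⟩ := hco
    refine ⟨v a + (g - v a) * (u * t a), fun i hi => ?_⟩
    rcases Finset.mem_insert.mp hi with rfl | hi
    · exact ⟨(g - v i) * u, by ring⟩
    · have h1 : t i ∣ (v a + (g - v a) * (u * t a)) - g := by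
        have he : (v a + (g - v a) * (u * t a)) - g = -((g - v a) * w) * ∏ j ∈ s, t j := by
          have h2 : u * t a = 1 - w * ∏ j ∈ s, t j := by linear_combination huw
          rw [h2]; ring
        rw [he]
        exact Dvd.dvd.mul_left (Finset.dvd_prod_of_mem t hi) _
      have := dvd_add h1 (hg i hi)
      simpa using this

lemma comp_inverse (h : Polynomial ℂ) (h0 : h.coeff 0 = 0) (h1 : h.coeff 1 ≠ 0) (m : ℕ) :
    ∃ g : Polynomial ℂ, g.coeff 0 = 0 ∧ X ^ (m + 1) ∣ g.comp h - X := by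
  obtain ⟨u, hu⟩ : X ∣ h := X_dvd_iff.mpr h0
  have hu0 : u.coeff 0 = h.coeff 1 := by rw [hu, coeff_X_mul]
  induction m with
  | zero =>
    exact ⟨0, by simp, by simpa using (dvd_neg.mpr dvd_rfl : (X : Polynomial ℂ) ∣ -X)⟩
  | succ m ih =>
    obtain ⟨g, hg0, w, hw⟩ := ih
    set c : ℂ := w.coeff 0 / (h.coeff 1) ^ (m + 1) with hc
    refine ⟨g - C c * X ^ (m + 1), ?_, ?_⟩
    · simp [coeff_mul, hg0, coeff_X_pow]
    · have e1 : (g - C c * X ^ (m + 1)).comp h - X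
          = X ^ (m + 1) * (w - C c * u ^ (m + 1)) := by
        have hpow : h ^ (m + 1) = X ^ (m + 1) * u ^ (m + 1) := by rw [hu, mul_pow]
        rw [sub_comp, mul_comp, C_comp, X_pow_comp, hpow]
        linear_combination hw
      rw [e1, pow_succ]
      refine mul_dvd_mul_left _ (X_dvd_iff.mpr ?_)
      have : (u ^ (m + 1)).coeff 0 = (h.coeff 1) ^ (m + 1) := by
        rw [coeff_zero_eq_eval_zero, eval_pow, ← coeff_zero_eq_eval_zero, hu0]
      simp [coeff_mul, this, coeff_X_pow, hc]
      field_simp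
      simp

lemma aeval_corner {R : Type*} [Ring R] [Algebra ℂ R] (B P : R) (hBP : Commute B P)
    (hP : IsIdempotentElem P) (q : Polynomial ℂ) (hq : q.coeff 0 = 0) :
    Polynomial.aeval (B * P) q = Polynomial.aeval B q * P := by
  rw [Polynomial.aeval_eq_sum_range, Polynomial.aeval_eq_sum_range, Finset.sum_mul]
  refine Finset.sum_congr rfl fun i _ => ?_
  cases i with
  | zero => simp [hq]
  | succ k =>
    rw [hBP.mul_pow, hP.pow_succ_eq, smul_mul_assoc]

lemma commute_aeval {R : Type*} [Ring R] [Algebra ℂ R] (B A : R) (h : Commute B A)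
    (q : Polynomial ℂ) : Commute B (Polynomial.aeval A q) := by
  rw [Polynomial.aeval_eq_sum_range]
  exact Commute.sum_right _ _ _ fun i _ => ((h.pow_right i).smul_right _)

variable {n : ℕ}

lemma banach_exp_scalar {𝔸 : Type*} [NormedRing 𝔸] [NormedAlgebra ℂ 𝔸] [CompleteSpace 𝔸]
    (z : ℂ) (M : 𝔸) :
    exp (algebraMap ℂ 𝔸 z + M) = Complex.exp z • exp M := by
  letI : NormedAlgebra ℚ 𝔸 := NormedAlgebra.restrictScalars ℚ ℂ 𝔸
  rw [exp_add_of_commute (Algebra.commute_algebraMap_left z M), ← algebraMap_exp_comm,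
    ← Complex.exp_eq_exp_ℂ, Algebra.smul_def]

lemma exp_scalar_add {n : ℕ} (z : ℂ) (M : Matrix (Fin n) (Fin n) ℂ) :
    exp (algebraMap ℂ (Matrix (Fin n) (Fin n) ℂ) z + M) = Complex.exp z • exp M := by
  letI : SeminormedRing (Matrix (Fin n) (Fin n) ℂ) := Matrix.linftyOpSemiNormedRing
  letI : NormedRing (Matrix (Fin n) (Fin n) ℂ) := Matrix.linftyOpNormedRing
  letI : NormedAlgebra ℂ (Matrix (Fin n) (Fin n) ℂ) := Matrix.linftyOpNormedAlgebra
  exact banach_exp_scalar z M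

lemma exp_corner (N P : Matrix (Fin n) (Fin n) ℂ) (h : Commute N P) (hP : IsIdempotentElem P) :
    exp N * P = exp (N * P) * P := by
  letI : SeminormedRing (Matrix (Fin n) (Fin n) ℂ) := Matrix.linftyOpSemiNormedRing
  letI : NormedRing (Matrix (Fin n) (Fin n) ℂ) := Matrix.linftyOpNormedRing
  letI : NormedAlgebra ℂ (Matrix (Fin n) (Fin n) ℂ) := Matrix.linftyOpNormedAlgebra
  simp only [exp_eq_tsum ℂ]
  erw [← (expSeries_summable' (𝕂 := ℂ) N).tsum_mul_right P,
      ← (expSeries_summable' (𝕂 := ℂ) (N * P)).tsum_mul_right P]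
  refine tsum_congr fun k => ?_
  cases k with
  | zero => simp
  | succ k =>
    rw [smul_mul_assoc, smul_mul_assoc, h.mul_pow, mul_assoc, hP.pow_succ_eq, hP.eq]

lemma exp_nilpotent_sum (N : Matrix (Fin n) (Fin n) ℂ) (m : ℕ) (hN : N ^ m = 0) :
    exp N = ∑ k ∈ Finset.range (m + 1), (k.factorial⁻¹ : ℂ) • N ^ k := by
  rw [exp_eq_tsum ℂ]
  refine tsum_eq_sum fun k hk => ?_
  have hk' : m ≤ k := by
    simp only [Finset.mem_range, not_lt] at hk; omega
  have : N ^ k = 0 := by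
    obtain ⟨j, rfl⟩ := Nat.exists_eq_add_of_le hk'
    rw [pow_add, hN, zero_mul]
  simp [this]

end Aux

/-- If `E` is non-resonant (no two eigenvalues differ by a
nonzero integer), then `E` is a polynomial in `exp(2πi·E)`; in particular every
matrix commuting with `exp(2πi·E)` commutes with `E`. -/
theorem stmt11 (n : ℕ) (E : Matrix (Fin n) (Fin n) ℂ)
    (hnr : ∀ x y : ℂ, E.charpoly.IsRoot x → E.charpoly.IsRoot y →
      ∀ z : ℤ, x - y = (z : ℂ) → x = y) :
    (∃ q : Polynomial ℂ,
      Polynomial.aeval (NormedSpace.exp (((2 * Real.pi : ℝ) * Complex.I) • E)) q = E) ∧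
    ∀ B : Matrix (Fin n) (Fin n) ℂ,
      Commute B (NormedSpace.exp (((2 * Real.pi : ℝ) * Complex.I) • E)) →
        Commute B E := by
  classical
  suffices hmain : ∃ q : Polynomial ℂ,
      Polynomial.aeval (NormedSpace.exp (((2 * Real.pi : ℝ) * Complex.I) • E)) q = E by
    obtain ⟨q, hq⟩ := hmain
    exact ⟨⟨q, hq⟩, fun B hB => hq ▸ commute_aeval B _ hB q⟩
  set c : ℂ := ((2 * Real.pi : ℝ) : ℂ) * Complex.I with hc
  have hc0 : c ≠ 0 := by
    refine mul_ne_zero ?_ Complex.I_ne_zero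
    exact_mod_cast (by positivity : (2 * Real.pi : ℝ) ≠ 0)
  set A : Matrix (Fin n) (Fin n) ℂ := exp (c • E) with hA
  show ∃ q : Polynomial ℂ, Polynomial.aeval A q = E
  set p : Polynomial ℂ := E.charpoly with hp
  have hmonic : p.Monic := E.charpoly_monic
  have hp0 : p ≠ 0 := hmonic.ne_zero
  set s : Finset ℂ := p.roots.toFinset with hs
  have hroot : ∀ lam ∈ s, p.IsRoot lam := fun lam hl =>
    ((Polynomial.mem_roots hp0).mp (Multiset.mem_toFinset.mp hl))
  set m : ℂ → ℕ := fun lam => p.rootMultiplicity lam with hm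
  have hm1 : ∀ lam ∈ s, m lam ≠ 0 := fun lam hl =>
    ((Polynomial.rootMultiplicity_pos hp0).mpr (hroot lam hl)).ne'
  have hfact : p = ∏ lam ∈ s, (X - C lam) ^ m lam := by
    conv_lhs => rw [Polynomial.Splits.eq_prod_roots_of_monic
      (IsAlgClosed.splits p) hmonic]
    rw [Finset.prod_multiset_map_count]
    exact Finset.prod_congr rfl fun lam _ => by rw [Polynomial.count_roots]
  set μ : ℂ → ℂ := fun lam => Complex.exp (c * lam) with hμdef
  have hμne : ∀ lam, μ lam ≠ 0 := fun lam => Complex.exp_ne_zero _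
  have hμinj : ∀ lam ∈ s, ∀ κ ∈ s, μ lam = μ κ → lam = κ := by
    intro lam hl κ hk he
    obtain ⟨z, hz⟩ := Complex.exp_eq_exp_iff_exists_int.mp he
    refine hnr lam κ (hroot lam hl) (hroot κ hk) z ?_
    have h2 : c * lam = c * κ + z * c := by
      rw [hz]; congr 1; rw [hc]; push_cast; ring
    have h3 : c * (lam - κ) = c * z := by linear_combination h2
    have := mul_left_cancel₀ hc0 h3
    linear_combination this
  have hcop : (s : Set ℂ).Pairwise (Function.onFun IsCoprime fun lam => (X - C lam) ^ m lam) :=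
    fun lam _ κ _ hne =>
      (Polynomial.isCoprime_X_sub_C_of_isUnit_sub (sub_ne_zero.mpr hne).isUnit).pow
  have hcopμ : (s : Set ℂ).Pairwise (Function.onFun IsCoprime fun lam => (X - C (μ lam)) ^ m lam) :=
    fun lam hl κ hk hne =>
      (Polynomial.isCoprime_X_sub_C_of_isUnit_sub
        (sub_ne_zero.mpr fun he => hne (hμinj lam hl κ hk he)).isUnit).pow
  have hpdvd : ∀ q : Polynomial ℂ, (∀ lam ∈ s, (X - C lam) ^ m lam ∣ q) → p ∣ q :=
    fun q hq => hfact ▸ Finset.prod_dvd_of_coprime hcop hq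
  have haeval0 : ∀ q : Polynomial ℂ, p ∣ q → Polynomial.aeval E q = 0 := by
    rintro q ⟨t, rfl⟩
    rw [map_mul, hp]
    rw [Matrix.aeval_self_charpoly, zero_mul]
  choose f hf using fun lam : ℂ =>
    crt_interp (fun κ => (X - C κ) ^ m κ) (fun κ => if κ = lam then 1 else 0) s hcop
  choose g hg using fun lam : ℂ =>
    crt_interp (fun κ => (X - C (μ κ)) ^ m κ) (fun κ => if κ = lam then 1 else 0) s hcopμ
  set P : ℂ → Matrix (Fin n) (Fin n) ℂ := fun lam => Polynomial.aeval E (f lam) with hPdef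
  have hPidem : ∀ lam ∈ s, IsIdempotentElem (P lam) := by
    intro lam hl
    have hd : p ∣ f lam * f lam - f lam := by
      refine hpdvd _ fun κ hk => ?_
      have h1 := hf lam κ hk
      have he : f lam * f lam - f lam
          = (f lam - (if κ = lam then 1 else 0)) * (f lam + (if κ = lam then 1 else 0) - 1) := by
        split_ifs <;> ring
      rw [he]
      exact h1.mul_right _
    have := haeval0 _ hd
    rw [map_sub, map_mul, sub_eq_zero] at this
    exact this
  have hPsum : ∑ lam ∈ s, P lam = 1 := by
    have hd : p ∣ (∑ lam ∈ s, f lam) - 1 := by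
      refine hpdvd _ fun κ hk => ?_
      have he : (∑ lam ∈ s, f lam) - 1
          = ∑ lam ∈ s, (f lam - (if κ = lam then 1 else 0)) := by
        rw [Finset.sum_sub_distrib]
        congr 1
        rw [Finset.sum_ite_eq s κ (fun _ => (1 : Polynomial ℂ)), if_pos hk]
      rw [he]
      exact Finset.dvd_sum fun lam _ => hf lam κ hk
    have := haeval0 _ hd
    rw [map_sub, map_sum, map_one, sub_eq_zero] at this
    exact this
  have hCommEP : ∀ lam, Commute E (P lam) := fun lam =>
    commute_aeval E E (Commute.refl E) (f lam)
  have hCommAP : ∀ lam, Commute A (P lam) := fun lam =>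
    (((hCommEP lam).symm.smul_right c).exp_right).symm
  have main : ∀ lam ∈ s, ∃ r : Polynomial ℂ,
      Polynomial.aeval A r * P lam = E * P lam ∧
      (A - algebraMap ℂ (Matrix (Fin n) (Fin n) ℂ) (μ lam)) ^ m lam * P lam = 0 := by
    intro lam hl
    have hPi : IsIdempotentElem (P lam) := hPidem lam hl
    set B : Matrix (Fin n) (Fin n) ℂ := E - algebraMap ℂ _ lam with hBdef
    have hBP : Commute B (P lam) :=
      (hCommEP lam).sub_left (Algebra.commute_algebraMap_left lam (P lam))
    set N : Matrix (Fin n) (Fin n) ℂ := B * P lam with hNdef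
    have hNeq : N = Polynomial.aeval E ((X - C lam) * f lam) := by
      rw [map_mul, map_sub, Polynomial.aeval_X, Polynomial.aeval_C]
    have hNnil : N ^ m lam = 0 := by
      rw [hNeq, ← map_pow]
      refine haeval0 _ (hpdvd _ fun κ hk => ?_)
      rw [mul_pow]
      by_cases hkl : κ = lam
      · subst hkl
        exact Dvd.dvd.mul_right dvd_rfl _
      · have h1 : (X - C κ) ^ m κ ∣ f lam := by
          simpa [hkl] using hf lam κ hk
        exact (h1.trans (dvd_pow_self (f lam) (hm1 lam hl))).mul_left _
    -- exponential computation
    have hsplit : c • E = algebraMap ℂ (Matrix (Fin n) (Fin n) ℂ) (c * lam) + c • B := by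
      rw [hBdef, Algebra.algebraMap_eq_smul_one, smul_sub, Algebra.algebraMap_eq_smul_one,
        smul_smul]
      abel
    have hAfac : A = μ lam • exp (c • B) := by
      rw [hA, hsplit, exp_scalar_add]
    have hAP : A * P lam = μ lam • (exp (c • N) * P lam) := by
      rw [hAfac, smul_mul_assoc, exp_corner _ _ (hBP.smul_left c) hPi, smul_mul_assoc,
        ← hNdef]
    have hcNnil : (c • N) ^ m lam = 0 := by rw [_root_.smul_pow, hNnil, smul_zero]
    have hT : exp (c • N)
        = 1 + ∑ k ∈ Finset.range (m lam),
            (c ^ (k + 1) * (((k + 1).factorial : ℂ))⁻¹) • N ^ (k + 1) := by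
      have e2 : ∀ k : ℕ, (((k + 1).factorial : ℂ))⁻¹ • (c • N) ^ (k + 1)
          = (c ^ (k + 1) * (((k + 1).factorial : ℂ))⁻¹) • N ^ (k + 1) := fun k => by
        rw [_root_.smul_pow, smul_smul, mul_comm]
      rw [exp_nilpotent_sum (c • N) (m lam) hcNnil, Finset.sum_range_succ',
        Finset.sum_congr rfl fun k _ => e2 k]
      simp [add_comm]
    set h : Polynomial ℂ := ∑ k ∈ Finset.range (m lam),
        C (μ lam * (c ^ (k + 1) * (((k + 1).factorial : ℂ))⁻¹)) * X ^ (k + 1) with hhdef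
    have hh0 : h.coeff 0 = 0 := by
      rw [hhdef, finset_sum_coeff]
      refine Finset.sum_eq_zero fun k _ => ?_
      rw [coeff_C_mul, coeff_X_pow, if_neg (by omega)]
      simp
    have hh1 : h.coeff 1 = μ lam * c := by
      obtain ⟨mm, hmm⟩ := Nat.exists_eq_succ_of_ne_zero (hm1 lam hl)
      have hz : ∀ k ∈ Finset.range mm,
          (C (μ lam * (c ^ (k + 1 + 1) * (((k + 1 + 1).factorial : ℂ))⁻¹)) * X ^ (k + 1 + 1)).coeff 1
            = 0 := fun k _ => by
        rw [coeff_C_mul, coeff_X_pow, if_neg (by omega), mul_zero]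
      rw [hhdef, finset_sum_coeff, hmm, Finset.sum_range_succ', Finset.sum_congr rfl hz]
      simp [coeff_C_mul, coeff_X_pow]
    have hXdvdh : (X : Polynomial ℂ) ∣ h := X_dvd_iff.mpr hh0
    have hhN : Polynomial.aeval N h
        = μ lam • ∑ k ∈ Finset.range (m lam),
            (c ^ (k + 1) * (((k + 1).factorial : ℂ))⁻¹) • N ^ (k + 1) := by
      rw [hhdef, map_sum, Finset.smul_sum]
      refine Finset.sum_congr rfl fun k _ => ?_
      rw [map_mul, Polynomial.aeval_C, map_pow, Polynomial.aeval_X, ← Algebra.smul_def,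
        smul_smul]
    have hNP : ∀ k : ℕ, N ^ (k + 1) * P lam = N ^ (k + 1) := by
      intro k
      rw [hNdef, hBP.mul_pow, mul_assoc, ← pow_succ, hPi.pow_succ_eq, hPi.pow_succ_eq]
    have hM : A * P lam - μ lam • P lam = Polynomial.aeval N h := by
      rw [hAP, hT, add_mul, one_mul, Finset.sum_mul, hhN]
      have hTP : ∑ k ∈ Finset.range (m lam),
          ((c ^ (k + 1) * (((k + 1).factorial : ℂ))⁻¹) • N ^ (k + 1)) * P lam
          = ∑ k ∈ Finset.range (m lam),
            (c ^ (k + 1) * (((k + 1).factorial : ℂ))⁻¹) • N ^ (k + 1) :=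
        Finset.sum_congr rfl fun k _ => by rw [smul_mul_assoc, hNP k]
      rw [hTP, smul_add]
      abel
    set Amu : Matrix (Fin n) (Fin n) ℂ := A - algebraMap ℂ (Matrix (Fin n) (Fin n) ℂ) (μ lam)
      with hAmudef
    have hAmuComm : Commute Amu (P lam) :=
      (hCommAP lam).sub_left (Algebra.commute_algebraMap_left _ _)
    have hAmuP : Amu * P lam = Polynomial.aeval N h := by
      rw [hAmudef, sub_mul, Algebra.algebraMap_eq_smul_one, smul_mul_assoc, one_mul]
      exact hM
    have hcorner : Amu ^ m lam * P lam = 0 := by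
      obtain ⟨mm, hmm⟩ := Nat.exists_eq_succ_of_ne_zero (hm1 lam hl)
      have h1 : Amu ^ m lam * P lam = (Amu * P lam) ^ m lam := by
        rw [hAmuComm.mul_pow, hmm, hPi.pow_succ_eq]
      rw [h1, hAmuP, ← map_pow]
      obtain ⟨t, ht⟩ : (X : Polynomial ℂ) ^ m lam ∣ h ^ m lam := pow_dvd_pow_of_dvd hXdvdh _
      rw [ht, map_mul, map_pow, Polynomial.aeval_X, hNnil, zero_mul]
    obtain ⟨hi, hi0, hidvd⟩ :=
      comp_inverse h hh0 (by rw [hh1]; exact mul_ne_zero (hμne lam) hc0) (m lam - 1)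
    have hmeq : m lam - 1 + 1 = m lam := by
      have := hm1 lam hl; omega
    rw [hmeq] at hidvd
    have hiN : Polynomial.aeval N (hi.comp h) = N := by
      obtain ⟨w, hw⟩ := hidvd
      have hcomp : hi.comp h = X + X ^ m lam * w := by linear_combination hw
      rw [hcomp, map_add, map_mul, map_pow, Polynomial.aeval_X, hNnil, zero_mul, add_zero]
    have hNval : Polynomial.aeval Amu hi * P lam = N := by
      rw [← aeval_corner Amu (P lam) hAmuComm hPi hi hi0, hAmuP, ← Polynomial.aeval_comp, hiN]
    have hEP : E * P lam = lam • P lam + N := by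
      have hply : (X : Polynomial ℂ) * f lam = C lam * f lam + (X - C lam) * f lam := by ring
      have h1 : E * P lam = Polynomial.aeval E (X * f lam) := by
        rw [map_mul, Polynomial.aeval_X]
      rw [h1, hply, map_add, map_mul, Polynomial.aeval_C, ← Algebra.smul_def, ← hNeq]
    refine ⟨C lam + hi.comp (X - C (μ lam)), ?_, hcorner⟩
    have hAX : Polynomial.aeval A (X - C (μ lam)) = Amu := by
      rw [map_sub, Polynomial.aeval_X, Polynomial.aeval_C, hAmudef]
    rw [map_add, Polynomial.aeval_C, Polynomial.aeval_comp, hAX, add_mul, ← Algebra.smul_def,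
      hNval, hEP]
  choose! r hr hcornerA using main
  have hQP : ∀ lam : ℂ, ∀ κ ∈ s, Polynomial.aeval A (g lam) * P κ
      = if κ = lam then P κ else 0 := by
    intro lam κ hk
    obtain ⟨t, ht⟩ := hg lam κ hk
    have hgl : g lam = (if κ = lam then 1 else 0) + (X - C (μ κ)) ^ m κ * t := by
      linear_combination ht
    have hAX : Polynomial.aeval A (X - C (μ κ))
        = A - algebraMap ℂ (Matrix (Fin n) (Fin n) ℂ) (μ κ) := by
      rw [map_sub, Polynomial.aeval_X, Polynomial.aeval_C]
    have hcommtP : Commute (Polynomial.aeval A t) (P κ) :=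
      (commute_aeval (P κ) A (hCommAP κ).symm t).symm
    rw [hgl, map_add, map_mul, map_pow, hAX, add_mul, mul_assoc, hcommtP.eq, ← mul_assoc,
      hcornerA κ hk, zero_mul, add_zero]
    split_ifs <;> simp
  have hPg : ∀ lam ∈ s, P lam = Polynomial.aeval A (g lam) := by
    intro lam hl
    have h1 : Polynomial.aeval A (g lam) = Polynomial.aeval A (g lam) * ∑ κ ∈ s, P κ := by
      rw [hPsum, mul_one]
    rw [h1, Finset.mul_sum, Finset.sum_congr rfl fun κ hk => hQP lam κ hk,
      Finset.sum_ite_eq' s lam P, if_pos hl]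
  refine ⟨∑ lam ∈ s, r lam * g lam, ?_⟩
  rw [map_sum,
    Finset.sum_congr rfl fun lam hl => by rw [map_mul, ← hPg lam hl, hr lam hl],
    ← Finset.mul_sum, hPsum, mul_one]
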